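/- arXiv:2306.15901 — 2 statements merged into one kernel-verified Lean document; each statement's English description precedes it below -/
import Mathlib

section
/- For any complex numbers u, v and f(z) = z·ln|z| (with f(0)=0), setting y = max{|u|,|v|}, if y > 0 then |f(u) - f(v)| ≤ (|ln y| + 1)·|u - v|. -/
noncomputable def f (z : ℂ) : ℂ := z * Real.log ‖z‖

lemma aux_f (u v : ℂ) (hab : ‖u‖ ≤ ‖v‖) (hb : 0 < ‖v‖) :
    ‖f u - f v‖ ≤ (|Real.log (‖v‖)| + 1) * ‖u - v‖ := by
  set a := ‖u‖ with ha
  set b := ‖v‖ with hbdef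
  have key : f u - f v = (u - v) * (Real.log b : ℂ)
      + u * ((Real.log a - Real.log b : ℝ) : ℂ) := by
    simp only [f]
    push_cast
    ring
  rw [key]
  have h2 : ‖u * ((Real.log a - Real.log b : ℝ) : ℂ)‖ ≤ ‖u - v‖ := by
    rw [norm_mul, Complex.norm_real, Real.norm_eq_abs]
    rcases eq_or_lt_of_le (norm_nonneg u) with h0 | h0
    · simp only [ha, ← h0, zero_mul]
      exact norm_nonneg _
    · have hlog : |Real.log a - Real.log b| = Real.log b - Real.log a := by
        rw [abs_sub_comm, abs_of_nonneg]
        exact sub_nonneg.2 (Real.log_le_log h0 hab)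
      rw [hlog, ← Real.log_div (ne_of_gt hb) (ne_of_gt h0)]
      have hle : Real.log (b / a) ≤ b / a - 1 :=
        Real.log_le_sub_one_of_pos (by positivity)
      calc a * Real.log (b / a) ≤ a * (b / a - 1) := by
            exact mul_le_mul_of_nonneg_left hle (le_of_lt h0)
        _ = b - a := by have h0' : a ≠ 0 := ne_of_gt h0; field_simp
        _ ≤ ‖u - v‖ := by
            have := norm_sub_norm_le v u
            rw [norm_sub_rev v u] at this
            exact this
  calc ‖(u - v) * (Real.log b : ℂ) + u * ((Real.log a - Real.log b : ℝ) : ℂ)‖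
      ≤ ‖(u - v) * (Real.log b : ℂ)‖
        + ‖u * ((Real.log a - Real.log b : ℝ) : ℂ)‖ :=
        norm_add_le _ _
    _ ≤ |Real.log b| * ‖u - v‖ + ‖u - v‖ := by
        rw [norm_mul, Complex.norm_real, Real.norm_eq_abs, mul_comm]
        exact add_le_add_right h2 _
    _ = (|Real.log b| + 1) * ‖u - v‖ := by ring

theorem stmt_1 (u v : ℂ) (hy : max ‖u‖ ‖v‖ > 0) :
    ‖f u - f v‖ ≤
      (|Real.log (max ‖u‖ ‖v‖)| + 1) * ‖u - v‖ := by
  rcases le_total (‖u‖) (‖v‖) with h | h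
  · rw [max_eq_right h] at hy ⊢
    exact aux_f u v h hy
  · rw [max_eq_left h] at hy ⊢
    rw [norm_sub_rev u v, norm_sub_rev (f u) (f v)]
    exact aux_f v u h hy
end

section
/- Let Ω be a bounded measurable domain, α ∈ (0,1), and ε ∈ (0, δ_α] with δ_α = exp(α/(α-1)). If u, v ∈ L^∞(Ω) satisfy max{‖u‖_∞, ‖v‖_∞} ≤ ε, then ‖f(u) - f(v)‖_{L²(Ω)} ≤ H_α(ε)·‖u - v‖_{L^{2α}(Ω)}^α, where f(w) = w·ln|w| pointwise (f(0) = 0) and H_α(ε) = (2ε)^{1-α}(|ln ε| + 1). -/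
open MeasureTheory

lemma step1 (a b : ℂ) (hba : ‖b‖ ≤ ‖a‖) (ha1 : ‖a‖ ≤ 1) :
    ‖f a - f b‖ ≤ ‖a-b‖ * (1 - Real.log (‖a‖)) := by
  have hid : f a - f b = (a-b) * (Real.log (‖a‖) : ℂ)
      + b * ((Real.log (‖a‖) : ℂ) - (Real.log (‖b‖) : ℂ)) := by
    unfold f; ring
  have hloga : Real.log (‖a‖) ≤ 0 :=
    Real.log_nonpos (norm_nonneg a) ha1
  have h2 : ‖b‖ * |Real.log (‖a‖) - Real.log (‖b‖)|
      ≤ ‖a‖ - ‖b‖ := by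
    rcases eq_or_ne b 0 with rfl | hb
    · simp [hba]
    · have hb0 : 0 < ‖b‖ := norm_pos_iff.mpr hb
      have ha0 : 0 < ‖a‖ := lt_of_lt_of_le hb0 hba
      have hle : Real.log (‖b‖) ≤ Real.log (‖a‖) :=
        Real.log_le_log hb0 hba
      rw [abs_of_nonneg (by linarith)]
      have : Real.log (‖a‖) - Real.log (‖b‖)
          = Real.log (‖a‖ / ‖b‖) := (Real.log_div ha0.ne' hb0.ne').symm
      rw [this]
      have hlog : Real.log (‖a‖ / ‖b‖) ≤ ‖a‖ / ‖b‖ - 1 :=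
        Real.log_le_sub_one_of_pos (by positivity)
      calc ‖b‖ * Real.log (‖a‖ / ‖b‖)
          ≤ ‖b‖ * (‖a‖ / ‖b‖ - 1) := by
            gcongr
        _ = ‖a‖ - ‖b‖ := by field_simp
  calc ‖f a - f b‖
      ≤ ‖(a-b) * (Real.log (‖a‖) : ℂ)‖
        + ‖b * ((Real.log (‖a‖) : ℂ) - (Real.log (‖b‖) : ℂ))‖ := by
        rw [hid]; exact norm_add_le _ _
    _ = ‖a-b‖ * |Real.log (‖a‖)|
        + ‖b‖ * |Real.log (‖a‖) - Real.log (‖b‖)| := by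
        rw [norm_mul, norm_mul, ← Complex.ofReal_sub, Complex.norm_real, Complex.norm_real, Real.norm_eq_abs, Real.norm_eq_abs]
    _ ≤ ‖a-b‖ * (-Real.log (‖a‖)) + (‖a‖ - ‖b‖) := by
        rw [abs_of_nonpos hloga]
        exact add_le_add_right h2 _
    _ ≤ ‖a-b‖ * (-Real.log (‖a‖)) + ‖a-b‖ := by
        gcongr
        have := norm_add_le (a - b) b
        simp only [sub_add_cancel] at this
        linarith
    _ = ‖a-b‖ * (1 - Real.log (‖a‖)) := by ring

-- decreasingness of (1+x)e^{-βx} for x ≥ 1/β - 1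
lemma key_h (β x1 x2 : ℝ) (hβ : 0 < β) (h1 : 1/β ≤ 1 + x1) (h12 : x1 ≤ x2) :
    (1 + x2) * Real.exp (-(β * x2)) ≤ (1 + x1) * Real.exp (-(β * x1)) := by
  have hx1 : 0 < 1 + x1 := lt_of_lt_of_le (by positivity) h1
  have h2 : (1 + x2) ≤ (1 + x1) * Real.exp (β * (x2 - x1)) := by
    have e1 : (x2 - x1)/(1+x1) + 1 ≤ Real.exp ((x2-x1)/(1+x1)) := Real.add_one_le_exp _
    have e2 : (x2-x1)/(1+x1) ≤ β*(x2-x1) := by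
      have hb : 1/(1+x1) ≤ β := by
        rw [div_le_iff₀ hx1]
        calc (1:ℝ) = β * (1/β) := by field_simp
          _ ≤ β * (1+x1) := by gcongr
      calc (x2-x1)/(1+x1) = (1/(1+x1)) * (x2-x1) := by ring
        _ ≤ β*(x2-x1) := by gcongr
    calc 1 + x2 = (1+x1) * ((x2-x1)/(1+x1) + 1) := by field_simp; ring
      _ ≤ (1+x1) * Real.exp ((x2-x1)/(1+x1)) := by gcongr
      _ ≤ (1+x1) * Real.exp (β*(x2-x1)) := by
        have := Real.exp_le_exp.2 e2
        nlinarith [Real.exp_pos ((x2-x1)/(1+x1))]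
  calc (1 + x2) * Real.exp (-(β * x2))
      ≤ ((1+x1) * Real.exp (β*(x2-x1))) * Real.exp (-(β * x2)) := by
        gcongr
    _ = (1 + x1) * Real.exp (-(β * x1)) := by
        rw [mul_assoc, ← Real.exp_add]; ring_nf

lemma pointwise_half (α ε : ℝ) (hα0 : 0 < α) (hα1 : α < 1) (hε : 0 < ε)
    (hεδ : ε ≤ Real.exp (α / (α - 1)))
    (a b : ℂ) (ha : ‖a‖ ≤ ε) (hb : ‖b‖ ≤ ε)
    (hba : ‖b‖ ≤ ‖a‖) :
    ‖f a - f b‖ ≤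
      (2 * ε) ^ (1 - α) * (|Real.log ε| + 1) * ‖a - b‖ ^ α := by
  have hε1 : ε < 1 := lt_of_le_of_lt hεδ (by
    rw [Real.exp_lt_one_iff]
    exact div_neg_of_pos_of_neg hα0 (by linarith))
  have hlogε : Real.log ε ≤ α / (α - 1) := by
    have := Real.log_le_log hε hεδ
    rwa [Real.log_exp] at this
  have hlogε0 : Real.log ε < 0 := Real.log_neg hε hε1
  have habs : |Real.log ε| + 1 = 1 - Real.log ε := by rw [abs_of_neg hlogε0]; ring
  set s := ‖a‖ with hs
  set r := ‖a - b‖ with hr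
  have hr0 : 0 ≤ r := norm_nonneg _
  rcases eq_or_lt_of_le hr0 with hr0' | hrpos
  · have hab : a = b := sub_eq_zero.mp (norm_eq_zero.mp (hr0'.symm))
    rw [hab, sub_self, norm_zero]
    positivity
  · have hs0 : 0 < s := by
      rcases (norm_nonneg a).lt_or_eq with h | h
      · exact h
      · exfalso
        have ha0 : a = 0 := norm_eq_zero.mp h.symm
        have hb0 : b = 0 := norm_eq_zero.mp
          (le_antisymm (hba.trans h.symm.le) (norm_nonneg b))
        rw [ha0, hb0, sub_self, norm_zero] at hr
        exact hrpos.ne' hr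
    have hs1 : s ≤ 1 := le_trans ha (le_of_lt hε1)
    have hstep := step1 a b hba hs1
    have hlogs : Real.log s ≤ 0 := Real.log_nonpos hs0.le hs1
    have hr2s : r ≤ 2 * s := by
      calc r ≤ ‖a‖ + ‖b‖ := norm_sub_le a b
        _ ≤ 2 * s := by rw [hs]; linarith
    set β := 1 - α with hβ
    have hβ0 : 0 < β := by rw [hβ]; linarith
    have hmono : (2*s)^β * (1 - Real.log s) ≤ (2*ε)^β * (1 - Real.log ε) := by
      have e : 1/β = 1 - α/(α-1) := by
        rw [hβ, eq_sub_iff_add_eq,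
          div_add_div _ _ (by linarith : (1:ℝ)-α ≠ 0) (by linarith : α-(1:ℝ) ≠ 0),
          div_eq_one_iff_eq (mul_ne_zero (by linarith : (1:ℝ)-α ≠ 0) (by linarith : α-(1:ℝ) ≠ 0))]
        ring
      have h1 : 1/β ≤ 1 + (-Real.log ε) := by rw [e]; linarith
      have h12 : -Real.log ε ≤ -Real.log s :=
        neg_le_neg (Real.log_le_log hs0 ha)
      have hk := key_h β (-Real.log ε) (-Real.log s) hβ0 h1 h12
      have es : s ^ β = Real.exp (-(β * (-Real.log s))) := by
        rw [Real.rpow_def_of_pos hs0]; ring_nf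
      have ee : ε ^ β = Real.exp (-(β * (-Real.log ε))) := by
        rw [Real.rpow_def_of_pos hε]; ring_nf
      have h2s : (2*s)^β = 2^β * s^β := Real.mul_rpow (by norm_num) hs0.le
      have h2e : (2*ε)^β = 2^β * ε^β := Real.mul_rpow (by norm_num) hε.le
      rw [h2s, h2e, es, ee, mul_assoc, mul_assoc]
      apply mul_le_mul_of_nonneg_left _ (Real.rpow_nonneg (by norm_num) β)
      calc Real.exp (-(β * (-Real.log s))) * (1 - Real.log s)
          = (1 + (-Real.log s)) * Real.exp (-(β * (-Real.log s))) := by ring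
        _ ≤ (1 + (-Real.log ε)) * Real.exp (-(β * (-Real.log ε))) := hk
        _ = Real.exp (-(β * (-Real.log ε))) * (1 - Real.log ε) := by ring
    calc ‖f a - f b‖ ≤ r * (1 - Real.log s) := hstep
      _ = r^α * (r^β * (1 - Real.log s)) := by
          rw [← mul_assoc, ← Real.rpow_add hrpos]
          have hab1 : α + β = 1 := by rw [hβ]; ring
          rw [hab1, Real.rpow_one]
      _ ≤ r^α * ((2*s)^β * (1 - Real.log s)) := by
          apply mul_le_mul_of_nonneg_left _ (Real.rpow_nonneg hr0 α)
          exact mul_le_mul_of_nonneg_right (Real.rpow_le_rpow hr0 hr2s hβ0.le) (by linarith)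
      _ ≤ r^α * ((2*ε)^β * (1 - Real.log ε)) :=
          mul_le_mul_of_nonneg_left hmono (Real.rpow_nonneg hr0 α)
      _ = (2 * ε) ^ (1 - α) * (|Real.log ε| + 1) * r ^ α := by
          rw [habs, hβ]; ring

lemma pointwise (α ε : ℝ) (hα0 : 0 < α) (hα1 : α < 1) (hε : 0 < ε)
    (hεδ : ε ≤ Real.exp (α / (α - 1)))
    (a b : ℂ) (ha : ‖a‖ ≤ ε) (hb : ‖b‖ ≤ ε) :
    ‖f a - f b‖ ≤
      (2 * ε) ^ (1 - α) * (|Real.log ε| + 1) * ‖a - b‖ ^ α := by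
  rcases le_total (‖b‖) (‖a‖) with h | h
  · exact pointwise_half α ε hα0 hα1 hε hεδ a b ha hb h
  · have := pointwise_half α ε hα0 hα1 hε hεδ b a hb ha h
    rwa [norm_sub_rev b a, norm_sub_rev (f b) (f a)] at this

theorem stmt_10 {d : ℕ} (Ω : Set (Fin d → ℝ)) (hΩ : MeasurableSet Ω)
    (hfin : volume Ω ≠ ⊤) (α : ℝ) (hα : α ∈ Set.Ioo (0:ℝ) 1)
    (ε : ℝ) (hε : 0 < ε) (hεδ : ε ≤ Real.exp (α / (α - 1)))
    (u v : (Fin d → ℝ) → ℂ) (hu : Measurable u) (hv : Measurable v)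
    (hub : ∀ᵐ x ∂(volume.restrict Ω), ‖u x‖ ≤ ε)
    (hvb : ∀ᵐ x ∂(volume.restrict Ω), ‖v x‖ ≤ ε) :
    (∫ x in Ω, ‖f (u x) - f (v x)‖ ^ (2:ℝ)) ^ ((1:ℝ) / 2) ≤
      (2 * ε) ^ (1 - α) * (|Real.log ε| + 1) *
        ((∫ x in Ω, ‖u x - v x‖ ^ (2 * α)) ^ (1 / (2 * α))) ^ α := by
  obtain ⟨hα0, hα1⟩ := hα
  set C := (2*ε)^(1-α) * (|Real.log ε| + 1) with hC
  have hC0 : 0 ≤ C := by positivity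
  haveI : IsFiniteMeasure (volume.restrict Ω) :=
    ⟨by rwa [Measure.restrict_apply_univ, lt_top_iff_ne_top]⟩
  have hpt : ∀ᵐ x ∂(volume.restrict Ω),
      ‖f (u x) - f (v x)‖ ^ (2:ℝ) ≤ C^2 * ‖u x - v x‖ ^ (2*α) := by
    filter_upwards [hub, hvb] with x hxu hxv
    have h1 := pointwise α ε hα0 hα1 hε hεδ (u x) (v x) hxu hxv
    have hA : (0:ℝ) ≤ ‖f (u x) - f (v x)‖ := norm_nonneg _
    have hY : (0:ℝ) ≤ ‖u x - v x‖ := norm_nonneg _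
    calc ‖f (u x) - f (v x)‖ ^ (2:ℝ)
        ≤ (C * ‖u x - v x‖ ^ α) ^ (2:ℝ) :=
          Real.rpow_le_rpow hA h1 (by norm_num)
      _ = C^2 * ‖u x - v x‖ ^ (2*α) := by
          rw [Real.mul_rpow hC0 (Real.rpow_nonneg hY α), ← Real.rpow_natCast C 2,
            ← Real.rpow_mul hY]
          norm_num [mul_comm]
  have hmeasY : Measurable fun x => ‖u x - v x‖ ^ (2*α) :=
    (Real.continuous_rpow_const (by positivity)).measurable.comp
      (continuous_norm.measurable.comp (hu.sub hv))
  have hbound : ∀ᵐ x ∂(volume.restrict Ω),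
      ‖C^2 * ‖u x - v x‖ ^ (2*α)‖ ≤ C^2 * (2*ε)^(2*α) := by
    filter_upwards [hub, hvb] with x hxu hxv
    have hY : (0:ℝ) ≤ ‖u x - v x‖ := norm_nonneg _
    rw [Real.norm_eq_abs, abs_of_nonneg (by positivity)]
    have h2 : ‖u x - v x‖ ≤ 2*ε := by
      calc ‖u x - v x‖ ≤ ‖u x‖ + ‖v x‖ :=
            norm_sub_le _ _
        _ ≤ 2*ε := by linarith
    exact mul_le_mul_of_nonneg_left (Real.rpow_le_rpow hY h2 (by positivity)) (sq_nonneg C)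
  have hint : Integrable (fun x => C^2 * ‖u x - v x‖ ^ (2*α))
      (volume.restrict Ω) :=
    (integrable_const (C^2 * (2*ε)^(2*α))).mono'
      ((hmeasY.const_mul _).aestronglyMeasurable) hbound
  have hnn : 0 ≤ᵐ[volume.restrict Ω]
      fun x => ‖f (u x) - f (v x)‖ ^ (2:ℝ) := by
    filter_upwards with x
    positivity
  have hmono := integral_mono_of_nonneg hnn hint hpt
  rw [integral_const_mul] at hmono
  have hL0 : 0 ≤ ∫ x in Ω, ‖f (u x) - f (v x)‖ ^ (2:ℝ) :=
    integral_nonneg fun x => by positivity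
  have hI0 : 0 ≤ ∫ x in Ω, ‖u x - v x‖ ^ (2*α) :=
    integral_nonneg fun x => by positivity
  set I := ∫ x in Ω, ‖u x - v x‖ ^ (2*α) with hI
  calc (∫ x in Ω, ‖f (u x) - f (v x)‖ ^ (2:ℝ)) ^ ((1:ℝ)/2)
      ≤ (C^2 * I) ^ ((1:ℝ)/2) := Real.rpow_le_rpow hL0 hmono (by norm_num)
    _ = C * I ^ ((1:ℝ)/2) := by
        rw [Real.mul_rpow (sq_nonneg C) hI0, ← Real.rpow_natCast C 2, ← Real.rpow_mul hC0]
        norm_num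
    _ = C * (I ^ (1/(2*α))) ^ α := by
        have hexp : 1/(2*α)*α = (1:ℝ)/2 := by
          field_simp
        rw [← Real.rpow_mul hI0, hexp]
end
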